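/- Let X be a core compact sober space and S a ∪-basis of X (a basis of the topology closed under finite unions, including the empty union ∅). Then the map x ↦ S_x = {s ∈ S : x ∈ s} is a homeomorphism from X onto the spectrum Ŝ, where S is equipped with ⊆ as the order and the way-below relation ⋐ as ≺. -/

import Mathlib

variable {S : Type*} [SemilatticeSup S] [OrderBot S]

/-- A (nonempty) filter: an up-set in which any two elements have a common lower bound. -/
def IsFilt (F : Set S) : Prop :=
  F.Nonempty ∧ (∀ p ∈ F, ∀ q, p ≤ q → q ∈ F) ∧
    ∀ p ∈ F, ∀ q ∈ F, ∃ t ∈ F, t ≤ p ∧ t ≤ q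

/-- A filter is round if every member has a `r`-predecessor in the filter. -/
def IsRound (r : S → S → Prop) (F : Set S) : Prop :=
  ∀ p ∈ F, ∃ t ∈ F, r t p

/-- Primeness: `p ⊔ q ∈ P` implies `p ∈ P` or `q ∈ P`. -/
def IsPrimeFilt (P : Set S) : Prop :=
  ∀ p q, p ⊔ q ∈ P → p ∈ P ∨ q ∈ P

/-- The spectrum: proper round prime filters. -/
def Spec (r : S → S → Prop) : Type _ :=
  {P : Set S // IsFilt P ∧ IsRound r P ∧ IsPrimeFilt P ∧ ⊥ ∉ P}

/-- The basic open set `Ŝ_p`. -/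
def basicOpen (r : S → S → Prop) (p : S) : Set (Spec r) :=
  {P | p ∈ P.1}

instance specTop (r : S → S → Prop) : TopologicalSpace (Spec r) :=
  TopologicalSpace.generateFrom (Set.range (basicOpen r))

/-- Distributivity of `r`. -/
def IsDistrib (r : S → S → Prop) : Prop :=
  ∀ p s t, r p (s ⊔ t) → ∀ p', r p' p →
    ∃ s' t', r s' s ∧ r t' t ∧ p' ≤ s' ⊔ t' ∧ s' ⊔ t' ≤ p

/-- `r` is auxiliary. -/
def IsAux (r : S → S → Prop) : Prop :=
  (∀ p p' q' q, p ≤ p' → r p' q' → q' ≤ q → r p q) ∧ ∀ p q, r p q → p ≤ q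

/-- `r` is interpolative. -/
def IsInterp (r : S → S → Prop) : Prop :=
  ∀ p q, r p q → ∃ s, r p s ∧ r s q

/-- `r` is approximating: `≤` is the lower preorder of `r`. -/
def IsApprox (r : S → S → Prop) : Prop :=
  ∀ p q, p ≤ q ↔ ∀ t, r t p → r t q

/-- `r` is `∨`-preserving. -/
def IsSupPres (r : S → S → Prop) : Prop :=
  ∀ p p' q q', r p' p → r q' q → r (p' ⊔ q') (p ⊔ q)

/-- `S` with `r` is a `∨`-predomain. -/
def IsPredom (r : S → S → Prop) : Prop :=
  IsAux r ∧ IsApprox r ∧ IsInterp r ∧ IsSupPres r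

/-- Ideal: downward closed and closed under pairwise joins. -/
def IsIdl (I : Set S) : Prop :=
  (∀ p ∈ I, ∀ q, q ≤ p → q ∈ I) ∧ ∀ p ∈ I, ∀ q ∈ I, p ⊔ q ∈ I

/-- The way-below relation on subsets of a topological space:
every open cover of `q` has a finite subcover of `p`. -/
def WayBelow {X : Type*} [TopologicalSpace X] (p q : Set X) : Prop :=
  ∀ C : Set (Set X), (∀ U ∈ C, IsOpen U) → q ⊆ ⋃₀ C →
    ∃ F ⊆ C, F.Finite ∧ p ⊆ ⋃₀ F

/-- Core compactness. -/
def CoreCompact (X : Type*) [TopologicalSpace X] : Prop :=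
  ∀ (x : X) (U : Set X), IsOpen U → x ∈ U → ∃ V, IsOpen V ∧ x ∈ V ∧ WayBelow V U

/-- A `∪`-basis: a basis containing `∅` and closed under pairwise unions. -/
def IsUnionBasis {X : Type*} [TopologicalSpace X] (B : Set (Set X)) : Prop :=
  TopologicalSpace.IsTopologicalBasis B ∧ ∅ ∈ B ∧ ∀ p ∈ B, ∀ q ∈ B, p ∪ q ∈ B

/-- A filter on a `∪`-basis `B`. -/
def BFilt {X : Type*} [TopologicalSpace X] (B : Set (Set X)) (P : Set (Set X)) : Prop :=
  P.Nonempty ∧ P ⊆ B ∧ (∀ p ∈ P, ∀ q ∈ B, p ⊆ q → q ∈ P) ∧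
    ∀ p ∈ P, ∀ q ∈ P, ∃ t ∈ P, t ⊆ p ∧ t ⊆ q

/-- The spectrum of a `∪`-basis `B` with `⊆` as order and way-below `⋐` as `≺`:
proper round prime filters on `B`. -/
def BSpec {X : Type*} [TopologicalSpace X] (B : Set (Set X)) : Type _ :=
  {P : Set (Set X) // BFilt B P ∧ (∀ p ∈ P, ∃ t ∈ P, WayBelow t p) ∧
    (∀ p ∈ B, ∀ q ∈ B, p ∪ q ∈ P → p ∈ P ∨ q ∈ P) ∧ ∅ ∉ P}

def bBasic {X : Type*} [TopologicalSpace X] (B : Set (Set X)) (p : Set X) :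
    Set (BSpec B) := {P | p ∈ P.1}

instance bSpecTop {X : Type*} [TopologicalSpace X] (B : Set (Set X)) :
    TopologicalSpace (BSpec B) :=
  TopologicalSpace.generateFrom (Set.range (bBasic B))


section Aux4
open TopologicalSpace
variable {X : Type*} [TopologicalSpace X]

lemma wayBelow_mono4 {p p' q : Set X} (h : p ⊆ p') (hw : WayBelow p' q) : WayBelow p q := by
  intro C hC hcov
  obtain ⟨F, hF, hfin, hsub⟩ := hw C hC hcov
  exact ⟨F, hF, hfin, h.trans hsub⟩

lemma sUnion_mem_unionBasis4 {B : Set (Set X)} (hB : IsUnionBasis B) :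
    ∀ {F : Set (Set X)}, F.Finite → F ⊆ B → ⋃₀ F ∈ B := by
  intro F hfin
  refine Set.Finite.induction_on _ hfin (fun _ => by simpa using hB.2.1) ?_
  · intro a F ha hf ih hFB
    rw [Set.sUnion_insert]
    exact hB.2.2 a (hFB (Set.mem_insert _ _)) _ (ih fun s hs => hFB (Set.mem_insert_of_mem _ hs))

lemma mem_of_sUnion_mem4 {B : Set (Set X)} (hB : IsUnionBasis B) (P : BSpec B) :
    ∀ {F : Set (Set X)}, F.Finite → F ⊆ B → ⋃₀ F ∈ P.1 → ∃ s ∈ F, s ∈ P.1 := by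
  intro F hfin
  refine Set.Finite.induction_on _ hfin
    (fun _ h => by simp only [Set.sUnion_empty] at h; exact absurd h P.2.2.2.2) ?_
  · intro a F ha hf ih hFB h
    rw [Set.sUnion_insert] at h
    have hFB' : F ⊆ B := fun s hs => hFB (Set.mem_insert_of_mem _ hs)
    rcases P.2.2.2.1 a (hFB (Set.mem_insert _ _)) _ (sUnion_mem_unionBasis4 hB hf hFB') h with h1 | h2
    · exact ⟨a, Set.mem_insert _ _, h1⟩
    · obtain ⟨s, hs, hsP⟩ := ih hFB' h2
      exact ⟨s, Set.mem_insert_of_mem _ hs, hsP⟩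

lemma not_subset_sUnion4 {B : Set (Set X)} (hB : IsUnionBasis B) (P : BSpec B)
    {p : Set X} (hp : p ∈ P.1) : ¬ p ⊆ ⋃₀ (B \ P.1) := by
  intro hsub
  obtain ⟨t, htP, htw⟩ := P.2.2.1 p hp
  obtain ⟨F, hFsub, hFfin, htF⟩ := htw (B \ P.1) (fun U hU => hB.1.isOpen hU.1) hsub
  have hFB : F ⊆ B := fun s hs => (hFsub hs).1
  have hmem : ⋃₀ F ∈ P.1 := P.2.1.2.2.1 t htP _ (sUnion_mem_unionBasis4 hB hFfin hFB) htF
  obtain ⟨s, hsF, hsP⟩ := mem_of_sUnion_mem4 hB P hFfin hFB hmem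
  exact (hFsub hsF).2 hsP

end Aux4

theorem stmt4 {X : Type*} [TopologicalSpace X] [QuasiSober X] [T0Space X]
    (hcc : CoreCompact X) (B : Set (Set X)) (hB : IsUnionBasis B) :
    ∃ f : X ≃ₜ BSpec B, ∀ x, (f x).1 = {s | s ∈ B ∧ x ∈ s} := by
  classical
  have hmem : ∀ x : X, BFilt B {s | s ∈ B ∧ x ∈ s} ∧
      (∀ p ∈ {s | s ∈ B ∧ x ∈ s}, ∃ t ∈ {s | s ∈ B ∧ x ∈ s}, WayBelow t p) ∧
      (∀ p ∈ B, ∀ q ∈ B, p ∪ q ∈ {s | s ∈ B ∧ x ∈ s} → p ∈ {s | s ∈ B ∧ x ∈ s} ∨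
        q ∈ {s | s ∈ B ∧ x ∈ s}) ∧ ∅ ∉ {s | s ∈ B ∧ x ∈ s} := by
    intro x
    refine ⟨⟨?_, fun s hs => hs.1, fun p hp q hqB hpq => ⟨hqB, hpq hp.2⟩, ?_⟩, ?_, ?_, fun h => h.2⟩
    · obtain ⟨s, hsB, hxs, _⟩ := hB.1.exists_subset_of_mem_open (Set.mem_univ x) isOpen_univ
      exact ⟨s, hsB, hxs⟩
    · rintro p ⟨hpB, hxp⟩ q ⟨hqB, hxq⟩
      obtain ⟨t, htB, hxt, htsub⟩ := hB.1.exists_subset_of_mem_open (⟨hxp, hxq⟩ : x ∈ p ∩ q)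
        ((hB.1.isOpen hpB).inter (hB.1.isOpen hqB))
      exact ⟨t, ⟨htB, hxt⟩, fun y hy => (htsub hy).1, fun y hy => (htsub hy).2⟩
    · rintro p ⟨hpB, hxp⟩
      obtain ⟨V, hV, hxV, hVw⟩ := hcc x p (hB.1.isOpen hpB) hxp
      obtain ⟨t, htB, hxt, htV⟩ := hB.1.exists_subset_of_mem_open hxV hV
      exact ⟨t, ⟨htB, hxt⟩, wayBelow_mono4 htV hVw⟩
    · rintro p hpB q hqB ⟨_, hx⟩
      rcases hx with h | h
      · exact Or.inl ⟨hpB, h⟩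
      · exact Or.inr ⟨hqB, h⟩
  let f : X → BSpec B := fun x => ⟨{s | s ∈ B ∧ x ∈ s}, hmem x⟩
  have hinj : Function.Injective f := by
    intro x y hxy
    have h : ∀ s, (s ∈ B ∧ x ∈ s) ↔ (s ∈ B ∧ y ∈ s) := by
      intro s
      have h2 := congrArg Subtype.val hxy
      exact Set.ext_iff.1 h2 s
    refine Inseparable.eq ?_
    rw [inseparable_iff_forall_isOpen]
    intro U hU
    constructor
    · intro hx
      obtain ⟨s, hsB, hxs, hsU⟩ := hB.1.exists_subset_of_mem_open hx hU
      exact hsU ((h s).1 ⟨hsB, hxs⟩).2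
    · intro hy
      obtain ⟨s, hsB, hys, hsU⟩ := hB.1.exists_subset_of_mem_open hy hU
      exact hsU ((h s).2 ⟨hsB, hys⟩).2
  have hAmeets : ∀ P : BSpec B, ∀ s ∈ P.1, ((⋃₀ (B \ P.1))ᶜ ∩ s).Nonempty := by
    intro P s hs
    rw [Set.nonempty_iff_ne_empty]
    intro h
    refine not_subset_sUnion4 hB P hs ?_
    intro y hy
    by_contra hny
    exact (Set.eq_empty_iff_forall_notMem.1 h y) ⟨hny, hy⟩
  have hsurj : Function.Surjective f := by
    intro P
    set A := (⋃₀ (B \ P.1))ᶜ with hAdef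
    have hAc : IsClosed A := (isOpen_sUnion (fun t ht => hB.1.isOpen ht.1)).isClosed_compl
    have hmemA : ∀ s ∈ B, s ∉ P.1 → ∀ x ∈ s, x ∉ A := by
      intro s hsB hns x hxs hxA
      exact hxA (Set.subset_sUnion_of_mem (show s ∈ B \ P.1 from ⟨hsB, hns⟩) hxs)
    have hirr : IsIrreducible A := by
      constructor
      · obtain ⟨p, hp⟩ := P.2.1.1
        exact (hAmeets P p hp).mono Set.inter_subset_left
      · intro u v hu hv hAu hAv
        obtain ⟨xu, hxuA, hxuu⟩ := hAu
        obtain ⟨s, hsB, hxs, hsu⟩ := hB.1.exists_subset_of_mem_open hxuu hu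
        have hsP : s ∈ P.1 := by
          by_contra hns
          exact hmemA s hsB hns xu hxs hxuA
        obtain ⟨xv, hxvA, hxvv⟩ := hAv
        obtain ⟨t, htB, hxt, htv⟩ := hB.1.exists_subset_of_mem_open hxvv hv
        have htP : t ∈ P.1 := by
          by_contra hnt
          exact hmemA t htB hnt xv hxt hxvA
        obtain ⟨w, hwP, hws, hwt⟩ := P.2.1.2.2.2 s hsP t htP
        obtain ⟨z, hzA, hzw⟩ := hAmeets P w hwP
        exact ⟨z, hzA, hsu (hws hzw), htv (hwt hzw)⟩
    obtain ⟨x, hx⟩ : ∃ x : X, closure {x} = A :=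
      ⟨hirr.genericPoint, hirr.isGenericPoint_genericPoint hAc⟩
    refine ⟨x, Subtype.ext ?_⟩
    have hxA : x ∈ A := hx ▸ subset_closure rfl
    ext s
    simp only [f, Set.mem_setOf_eq]
    constructor
    · rintro ⟨hsB, hxs⟩
      by_contra hns
      exact hmemA s hsB hns x hxs hxA
    · intro hsP
      refine ⟨P.2.1.2.1 hsP, ?_⟩
      obtain ⟨z, hzA, hzs⟩ := hAmeets P s hsP
      have hz : z ∈ closure ({x} : Set X) := hx ▸ hzA
      obtain ⟨w, hws, hwx⟩ := mem_closure_iff.1 hz s (hB.1.isOpen (P.2.1.2.1 hsP)) hzs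
      rw [Set.mem_singleton_iff] at hwx
      rwa [hwx] at hws
  have hcont : Continuous f := by
    apply continuous_generateFrom_iff.mpr
    rintro _ ⟨p, rfl⟩
    by_cases hp : p ∈ B
    · have hpre : f ⁻¹' (bBasic B p) = p := by
        ext x
        exact ⟨fun h => h.2, fun h => ⟨hp, h⟩⟩
      rw [hpre]
      exact hB.1.isOpen hp
    · have hpre : f ⁻¹' (bBasic B p) = ∅ := by
        ext x
        exact ⟨fun h => hp h.1, fun h => h.elim⟩
      rw [hpre]
      exact isOpen_empty
  have hopen : IsOpenMap f := by
    intro U hU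
    have himg : f '' U = ⋃₀ {t | ∃ s ∈ B, s ⊆ U ∧ t = bBasic B s} := by
      ext P
      simp only [Set.mem_image, Set.mem_sUnion, Set.mem_setOf_eq]
      constructor
      · rintro ⟨x, hxU, rfl⟩
        obtain ⟨s, hsB, hxs, hsU⟩ := hB.1.exists_subset_of_mem_open hxU hU
        exact ⟨bBasic B s, ⟨s, hsB, hsU, rfl⟩, ⟨hsB, hxs⟩⟩
      · rintro ⟨_, ⟨s, hsB, hsU, rfl⟩, hPs⟩
        obtain ⟨x, rfl⟩ := hsurj P
        exact ⟨x, hsU (hPs.2 : x ∈ s), rfl⟩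
    rw [himg]
    refine isOpen_sUnion ?_
    rintro _ ⟨s, hsB, hsU, rfl⟩
    exact TopologicalSpace.isOpen_generateFrom_of_mem ⟨s, rfl⟩
  exact ⟨Equiv.toHomeomorphOfContinuousOpen (Equiv.ofBijective f ⟨hinj, hsurj⟩) hcont hopen,
    fun x => rfl⟩
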